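/- For every l ≥ 1 and every even-dimensional form φ ∈ I(F) in the Witt ring of a field F of characteristic ≠ 2, the element q_l(φ) := φ(φ−2)(φ−4)⋯(φ−2(l−1)) lies in 2^{ν₂(l!)}·I(F)^l, where I(F) is the fundamental ideal and ν₂ the 2-adic valuation. -/
import Mathlib


/-- An abstract model of the Witt ring `W(F)` of a field `F` of characteristic ≠ 2,
given by its standard presentation: a commutative ring together with the classes
`gen a` of the one-dimensional forms `⟨a⟩` (for `a ∈ F*`), satisfying
multiplicativity, the square relation `⟨a²⟩ = ⟨1⟩`, the hyperbolic relation
`⟨1⟩ + ⟨−1⟩ = 0` and the chain (Witt) relation, additively generated by the `gen a`,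
and equipped with the dimension-index homomorphism `e : W → ℤ/2`. -/
structure WittRing (F : Type*) [Field F] where
  /-- The underlying ring of Witt classes. -/
  W : Type*
  /-- The commutative ring structure. -/
  [commRing : CommRing W]
  /-- The class of the one-dimensional form `⟨a⟩`. -/
  gen : Fˣ → W
  gen_one : gen 1 = 1
  gen_mul : ∀ a b : Fˣ, gen (a * b) = gen a * gen b
  gen_sq : ∀ a : Fˣ, gen (a * a) = 1
  hyperbolic : gen 1 + gen (-1) = 0
  chain : ∀ (a b : Fˣ) (h : (a : F) + (b : F) ≠ 0),
    gen a + gen b =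
      gen (Units.mk0 ((a : F) + (b : F)) h) +
        gen (a * b * Units.mk0 ((a : F) + (b : F)) h)
  generates : AddSubgroup.closure (Set.range gen) = (⊤ : AddSubgroup W)
  /-- The dimension index `e : W(F) → ℤ/2ℤ`; its kernel is the fundamental ideal. -/
  dimIdx : W →+* ZMod 2
  dimIdx_gen : ∀ a : Fˣ, dimIdx (gen a) = 1

attribute [instance] WittRing.commRing

section QP
variable {R : Type*} [CommRing R]

def qp (x : R) : ℕ → R
  | 0 => 1
  | l + 1 => qp x l * (x - ((2 * l : ℕ) : ℤ) • (1 : R))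

lemma qp_succ (x : R) (l : ℕ) :
    qp x (l + 1) = qp x l * (x - ((2 * l : ℕ) : ℤ) • (1 : R)) := rfl

lemma qp_eq_prod (x : R) (l : ℕ) :
    qp x l = ∏ m ∈ Finset.range l, (x - (2 * m : ℕ) • (1 : R)) := by
  induction l with
  | zero => simp [qp]
  | succ l ih =>
      rw [Finset.prod_range_succ, ← ih, qp_succ, natCast_zsmul]

lemma qp_zero_succ (l : ℕ) : qp (0 : R) (l + 1) = 0 := by
  induction l with
  | zero => simp [qp]
  | succ l ih => rw [qp_succ, ih, zero_mul]
/-- Vandermonde-type identity for `qp`. -/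
lemma qp_add (x y : R) (l : ℕ) :
    qp (x + y) l = ∑ k ∈ Finset.range (l + 1),
      (l.choose k : ℤ) • (qp x k * qp y (l - k)) := by
  induction l with
  | zero => simp [qp]
  | succ l ih =>
      rw [qp_succ, ih, Finset.sum_mul]
      have hsplit : ∀ k ∈ Finset.range (l + 1),
          (l.choose k : ℤ) • (qp x k * qp y (l - k)) * (x + y - ((2 * l : ℕ) : ℤ) • (1 : R))
            = (l.choose k : ℤ) • (qp x (k + 1) * qp y (l - k))
              + (l.choose k : ℤ) • (qp x k * qp y (l - k + 1)) := by
        intro k hk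
        have hk' : k ≤ l := Nat.lt_succ_iff.mp (Finset.mem_range.mp hk)
        have h1 : x + y - ((2 * l : ℕ) : ℤ) • (1 : R)
            = (x - ((2 * k : ℕ) : ℤ) • (1 : R)) + (y - ((2 * (l - k) : ℕ) : ℤ) • (1 : R)) := by
          have : ((2 * l : ℕ) : ℤ) = ((2 * k : ℕ) : ℤ) + ((2 * (l - k) : ℕ) : ℤ) := by
            push_cast [Nat.cast_sub hk']; ring
          rw [this, add_zsmul]; ring
        rw [h1, qp_succ, qp_succ]
        simp only [zsmul_eq_mul]
        ring
      rw [Finset.sum_congr rfl hsplit, Finset.sum_add_distrib]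
      -- now massage the target
      have htarget : ∑ k ∈ Finset.range (l + 2),
          ((l + 1).choose k : ℤ) • (qp x k * qp y (l + 1 - k))
          = (∑ k ∈ Finset.range (l + 1),
              (l.choose k : ℤ) • (qp x (k + 1) * qp y (l - k)))
            + (∑ k ∈ Finset.range (l + 1),
              (l.choose k : ℤ) • (qp x k * qp y (l - k + 1))) := by
        rw [Finset.sum_range_succ' _ (l + 1)]
        have hch : ∀ k, ((l + 1).choose (k + 1) : ℤ) = (l.choose k : ℤ) + (l.choose (k + 1) : ℤ) := by
          intro k; exact_mod_cast congrArg (Nat.cast (R := ℤ)) (Nat.choose_succ_succ l k)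
        have : ∀ k ∈ Finset.range (l + 1),
            ((l + 1).choose (k + 1) : ℤ) • (qp x (k + 1) * qp y (l + 1 - (k + 1)))
            = (l.choose k : ℤ) • (qp x (k + 1) * qp y (l - k))
              + (l.choose (k + 1) : ℤ) • (qp x (k + 1) * qp y (l - k)) := by
          intro k hk
          rw [Nat.succ_sub_succ, hch, add_smul]
        rw [Finset.sum_congr rfl this, Finset.sum_add_distrib]
        have h2 : ∑ k ∈ Finset.range (l + 1),
            (l.choose (k + 1) : ℤ) • (qp x (k + 1) * qp y (l - k))
            + ((l + 1).choose 0 : ℤ) • (qp x 0 * qp y (l + 1 - 0))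
            = ∑ k ∈ Finset.range (l + 1), (l.choose k : ℤ) • (qp x k * qp y (l - k + 1)) := by
          rw [Finset.sum_range_succ' (fun k => (l.choose k : ℤ) • (qp x k * qp y (l - k + 1))) l,
            Finset.sum_range_succ]
          have h0 : ((l.choose (l + 1) : ℤ)) = 0 := by
            simp [Nat.choose_eq_zero_of_lt]
          rw [h0, zero_smul, add_zero]
          congr 1
          · apply Finset.sum_congr rfl
            intro k hk
            have hk' : k < l := Finset.mem_range.mp hk
            have hs : l - (k + 1) + 1 = l - k := by omega
            rw [hs]
          · simp [qp]
        rw [add_assoc, h2]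
      rw [htarget]
end QP



namespace WittAux

variable {F : Type*} [Field F] (V : WittRing F)

lemma gen_mul_self (a : Fˣ) : V.gen a * V.gen a = 1 := by
  rw [← V.gen_mul]; exact V.gen_sq a

lemma two_eq : (2 : V.W) = V.gen 1 - V.gen (-1) := by
  have h := V.hyperbolic
  rw [V.gen_one] at h ⊢
  have h2 : V.gen (-1) = -1 := by linear_combination h
  rw [h2]; ring

lemma two_mem : (2 : V.W) ∈ RingHom.ker V.dimIdx := by
  rw [two_eq V, RingHom.mem_ker, map_sub, V.dimIdx_gen, V.dimIdx_gen, sub_self]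

lemma one_sub_gen_mem (a : Fˣ) : (1 : V.W) - V.gen a ∈ RingHom.ker V.dimIdx := by
  rw [RingHom.mem_ker, map_sub, map_one, V.dimIdx_gen, sub_self]

lemma one_add_gen_mem (a : Fˣ) : (1 : V.W) + V.gen a ∈ RingHom.ker V.dimIdx := by
  rw [RingHom.mem_ker, map_add, map_one, V.dimIdx_gen]
  decide

lemma gen_sub_gen_mem (a b : Fˣ) : V.gen a - V.gen b ∈ RingHom.ker V.dimIdx := by
  rw [RingHom.mem_ker, map_sub, V.dimIdx_gen, V.dimIdx_gen, sub_self]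

/-- The key property. -/
def P (φ : V.W) : Prop :=
  ∀ l : ℕ, ∃ ψ ∈ (RingHom.ker V.dimIdx : Ideal V.W) ^ l,
    qp φ l = ((2 : ℤ) ^ (padicValNat 2 (Nat.factorial l))) • ψ

lemma P_zero : P V 0 := by
  intro l
  cases l with
  | zero => exact ⟨1, by simp, by simp [qp, Nat.factorial]⟩
  | succ l =>
      exact ⟨0, Submodule.zero_mem _, by rw [qp_zero_succ, smul_zero]⟩

end WittAux
namespace WittAux
variable {F : Type*} [Field F] (V : WittRing F)

lemma nu_split {l k : ℕ} (hk : k ≤ l) :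
    padicValNat 2 (l.choose k) + padicValNat 2 (Nat.factorial k)
      + padicValNat 2 (Nat.factorial (l - k)) = padicValNat 2 (Nat.factorial l) := by
  haveI : Fact (Nat.Prime 2) := ⟨Nat.prime_two⟩
  have h := Nat.choose_mul_factorial_mul_factorial hk
  rw [← h, padicValNat.mul (mul_ne_zero (Nat.choose_pos hk).ne' (Nat.factorial_ne_zero k))
      (Nat.factorial_ne_zero (l - k)),
    padicValNat.mul (Nat.choose_pos hk).ne' (Nat.factorial_ne_zero k)]

lemma P_add {x y : V.W} (hx : P V x) (hy : P V y) : P V (x + y) := by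
  intro l
  have key : ∀ k ∈ Finset.range (l + 1), ∃ ρ ∈ (RingHom.ker V.dimIdx : Ideal V.W) ^ l,
      (l.choose k : ℤ) • (qp x k * qp y (l - k))
        = ((2 : ℤ) ^ (padicValNat 2 (Nat.factorial l))) • ρ := by
    intro k hk
    have hk' : k ≤ l := Nat.lt_succ_iff.mp (Finset.mem_range.mp hk)
    obtain ⟨ψ₁, hψ₁, he₁⟩ := hx k
    obtain ⟨ψ₂, hψ₂, he₂⟩ := hy (l - k)
    obtain ⟨d, hd⟩ : (2 : ℕ) ^ (padicValNat 2 (l.choose k)) ∣ l.choose k :=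
      pow_padicValNat_dvd
    have hmem : ψ₁ * ψ₂ ∈ (RingHom.ker V.dimIdx : Ideal V.W) ^ l := by
      have h2 := Ideal.mul_mem_mul hψ₁ hψ₂
      rwa [← pow_add, Nat.add_sub_cancel' hk'] at h2
    refine ⟨(d : ℤ) • (ψ₁ * ψ₂), zsmul_mem hmem _, ?_⟩
    rw [he₁, he₂, smul_mul_smul_comm, smul_smul, smul_smul]
    congr 1
    rw [hd, ← nu_split hk']
    push_cast
    ring
  choose ρ hρmem hρeq using key
  refine ⟨∑ k ∈ (Finset.range (l + 1)).attach, ρ k k.2,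
    Submodule.sum_mem _ (fun k _ => hρmem k k.2), ?_⟩
  rw [qp_add, Finset.smul_sum,
    ← Finset.sum_attach (Finset.range (l + 1))
      (fun k => (l.choose k : ℤ) • (qp x k * qp y (l - k)))]
  exact Finset.sum_congr rfl fun k _ => hρeq k k.2

lemma P_gen (a b : Fˣ) : P V (V.gen a - V.gen b) := by
  set g := V.gen a with hgdef
  set h := V.gen b with hhdef
  have hg : g * g = 1 := gen_mul_self V a
  have hh : h * h = 1 := gen_mul_self V b
  set τ := g - h with hτdef
  set σ := (1 - g) * (1 + h) with hσdef
  have hσ : σ ∈ (RingHom.ker V.dimIdx : Ideal V.W) ^ 2 := by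
    rw [sq]
    exact Ideal.mul_mem_mul (one_sub_gen_mem V a) (one_add_gen_mem V b)
  have hτ : τ ∈ (RingHom.ker V.dimIdx : Ideal V.W) := gen_sub_gen_mem V a b
  have key2 : σ * τ = -(2 * σ) := by
    rw [hσdef, hτdef]
    linear_combination (-(1 + h)) * hg + (g - 1) * hh
  have key1 : τ * (τ - 2 * 1) = 2 * σ := by
    rw [hσdef, hτdef]
    linear_combination hg + hh
  have qp2 : ∀ j : ℕ, qp τ (j + 2)
      = (((-1 : ℤ)) ^ j * 2 ^ j * (Nat.factorial (j + 2) : ℤ)) • σ := by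
    intro j
    induction j with
    | zero =>
        have hfac : ((-1 : ℤ)) ^ 0 * 2 ^ 0 * (Nat.factorial (0 + 2) : ℤ) = 2 := by
          norm_num [Nat.factorial]
        rw [hfac, show (0:ℕ)+2 = 1+1 from rfl, qp_succ, qp_succ]
        simp only [qp, one_mul, zsmul_eq_mul]
        push_cast
        linear_combination key1
    | succ j ih =>
        rw [show j+1+2 = (j+2)+1 from rfl, qp_succ, ih, smul_mul_assoc]
        have hstep : σ * (τ - ((2 * (j + 2) : ℕ) : ℤ) • (1 : V.W))
            = ((-(2 * (j + 2) + 2)) : ℤ) • σ := by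
          rw [mul_sub, key2]
          simp only [zsmul_eq_mul]
          push_cast
          ring
        rw [hstep, smul_smul]
        congr 1
        have hfs : ((Nat.factorial (j + 1 + 2) : ℕ) : ℤ)
            = ((j : ℤ) + 3) * (Nat.factorial (j + 2) : ℤ) := by
          rw [show j + 1 + 2 = (j + 2) + 1 from rfl, Nat.factorial_succ]
          push_cast
          ring
        rw [hfs]
        ring
  intro l
  match l with
  | 0 => exact ⟨1, by simp, by simp [qp, Nat.factorial]⟩
  | 1 =>
      refine ⟨τ, by rwa [pow_one], ?_⟩
      have : padicValNat 2 (Nat.factorial 1) = 0 := by norm_num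
      rw [this, pow_zero, one_smul, qp_succ]
      simp [qp]
  | (j + 2) =>
      obtain ⟨d, hd⟩ : (2 : ℕ) ^ (padicValNat 2 (Nat.factorial (j + 2)))
          ∣ Nat.factorial (j + 2) := pow_padicValNat_dvd
      have hmem : (2 : V.W) ^ j * σ ∈ (RingHom.ker V.dimIdx : Ideal V.W) ^ (j + 2) := by
        have h2 := Ideal.mul_mem_mul (Ideal.pow_mem_pow (two_mem V) j) hσ
        rwa [← pow_add] at h2
      refine ⟨(((-1 : ℤ)) ^ j * d) • ((2 : V.W) ^ j * σ), zsmul_mem hmem _, ?_⟩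
      rw [qp2 j, smul_smul]
      have h2j : ((2 : V.W)) ^ j * σ = ((2 : ℤ) ^ j) • σ := by
        simp only [zsmul_eq_mul]
        push_cast
        ring
      rw [h2j, smul_smul]
      congr 1
      have hdz : ((Nat.factorial (j + 2) : ℕ) : ℤ)
          = 2 ^ (padicValNat 2 (Nat.factorial (j + 2))) * d := by
        exact_mod_cast congrArg (Nat.cast (R := ℤ)) hd
      rw [hdz]
      ring

end WittAux
namespace WittAux
variable {F : Type*} [Field F] (V : WittRing F)

/-- The generating set of binary elements. -/
def T : Set V.W := {x : V.W | ∃ a b : Fˣ, x = V.gen a - V.gen b}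

lemma mem_submonoid_closure (φ : V.W) (hφ : φ ∈ RingHom.ker V.dimIdx) :
    φ ∈ AddSubmonoid.closure (T V) := by
  set C : AddSubgroup V.W := AddSubgroup.closure (T V) with hC
  -- step 1 : every element is congruent to an integer multiple of 1 modulo C
  have hstep1 : ∃ n : ℤ, φ - n • (1 : V.W) ∈ C := by
    let D : AddSubgroup V.W :=
      { carrier := {ψ | ∃ n : ℤ, ψ - n • (1 : V.W) ∈ C}
        zero_mem' := ⟨0, by simpa using C.zero_mem⟩
        add_mem' := by
          rintro x y ⟨n, hn⟩ ⟨m, hm⟩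
          refine ⟨n + m, ?_⟩
          have hsum := C.add_mem hn hm
          have : x + y - (n + m) • (1 : V.W) = x - n • 1 + (y - m • 1) := by
            rw [add_zsmul]; abel
          rwa [this]
        neg_mem' := by
          rintro x ⟨n, hn⟩
          refine ⟨-n, ?_⟩
          have hneg := C.neg_mem hn
          have : -x - (-n) • (1 : V.W) = -(x - n • 1) := by
            rw [neg_zsmul]; abel
          rwa [this] }
    have htop : (⊤ : AddSubgroup V.W) ≤ D := by
      rw [← V.generates]
      apply (AddSubgroup.closure_le D).mpr
      rintro x ⟨a, rfl⟩
      refine ⟨1, ?_⟩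
      rw [one_zsmul]
      have : V.gen a - 1 = V.gen a - V.gen 1 := by rw [V.gen_one]
      rw [this]
      exact AddSubgroup.subset_closure ⟨a, 1, rfl⟩
    exact htop trivial
  obtain ⟨n, hn⟩ := hstep1
  -- step 2 : elements of C are in the kernel
  have hCker : C ≤ (RingHom.ker V.dimIdx : Ideal V.W).toAddSubgroup := by
    apply (AddSubgroup.closure_le _).mpr
    rintro x ⟨a, b, rfl⟩
    exact gen_sub_gen_mem V a b
  -- step 3 : n is even
  have hn0 : (n : ZMod 2) = 0 := by
    have h1 : V.dimIdx (φ - n • 1) = 0 := hCker hn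
    rw [map_sub, map_zsmul, map_one, RingHom.mem_ker.mp hφ, zsmul_one, zero_sub,
      neg_eq_zero] at h1
    exact h1
  obtain ⟨t, rfl⟩ : 2 ∣ n := by rwa [ZMod.intCast_zmod_eq_zero_iff_dvd] at hn0
  -- step 4 : φ ∈ C
  have hφC : φ ∈ C := by
    have h21 : (2 * t : ℤ) • (1 : V.W) ∈ C := by
      have heq : (2 * t : ℤ) • (1 : V.W) = t • ((2 : V.W)) := by
        rw [zsmul_eq_mul, zsmul_eq_mul]
        push_cast
        ring
      rw [heq, two_eq V]
      exact C.zsmul_mem (AddSubgroup.subset_closure ⟨1, -1, rfl⟩) t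
    have := C.add_mem hn h21
    simpa using this
  -- step 5 : convert to the submonoid closure
  have hsymm : T V ∪ -(T V) = T V := by
    apply Set.union_eq_self_of_subset_right
    rintro x hx
    obtain ⟨a, b, hab⟩ := Set.mem_neg.mp hx
    exact ⟨b, a, by linear_combination -hab⟩
  have hconv : C.toAddSubmonoid = AddSubmonoid.closure (T V) := by
    rw [hC, AddSubgroup.closure_toAddSubmonoid, hsymm]
  rw [← hconv]
  exact hφC

lemma P_of_mem (φ : V.W) (hφ : φ ∈ RingHom.ker V.dimIdx) : P V φ := by
  have hmem := mem_submonoid_closure V φ hφ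
  refine AddSubmonoid.closure_induction ?_ ?_ ?_ hmem
  · rintro x ⟨a, b, rfl⟩
    exact P_gen V a b
  · exact P_zero V
  · intro x y _ _ hx hy
    exact P_add V hx hy

end WittAux


/-- For every `l ≥ 1` and every even-dimensional form `φ ∈ I(F)` in the Witt ring
of a field of characteristic ≠ 2, the element
`q_l(φ) = φ(φ−2)(φ−4)⋯(φ−2(l−1))` lies in `2^{ν₂(l!)}·I(F)^l`, where `I(F)` is the
fundamental ideal (the kernel of the dimension index). -/
theorem stmt_19 (F : Type*) [Field F] (hF : (2 : F) ≠ 0) (V : WittRing F)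
    (l : ℕ) (hl : 1 ≤ l) (φ : V.W) (hφ : φ ∈ RingHom.ker V.dimIdx) :
    ∃ ψ ∈ (RingHom.ker V.dimIdx : Ideal V.W) ^ l,
      ∏ m ∈ Finset.range l, (φ - (2 * m : ℕ) • (1 : V.W)) =
        2 ^ (padicValNat 2 (Nat.factorial l)) • ψ := by
  obtain ⟨ψ, hmem, heq⟩ := WittAux.P_of_mem V φ hφ l
  refine ⟨ψ, hmem, ?_⟩
  rw [← qp_eq_prod, heq,
    show ((2 : ℤ)) ^ (padicValNat 2 (Nat.factorial l))
        = ((2 ^ (padicValNat 2 (Nat.factorial l)) : ℕ) : ℤ) by push_cast; ring,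
    natCast_zsmul]
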